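/- arXiv:math/0501257 — 5 statements merged into one kernel-verified Lean document; each statement's English description precedes it below -/
import Mathlib

section
/- Define 𝒜_k = (1/n)(n−k+1 + Σ_{j=1}^{k-1} ℙ_{jk}) where (ℙ_{jk}f)(x) replaces x_j by x_j·x_k and x_k by 1. Then 𝒜_k is invertible with inverse 𝒜_k^{-1} = (1/(n−k+1))(n − Σ_{j=1}^{k-1} ℙ_{jk}). -/
/-- With `ℙ_{jk}` substituting `x_j ↦ x_j x_k`, `x_k ↦ 1`, the
operator `𝒜_k = (1/n)(n−k+1 + ∑_{j<k} ℙ_{jk})` is invertible, with inverse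
`𝒜_k⁻¹ = (1/(n−k+1))(n − ∑_{j<k} ℙ_{jk})`.  (Here `k : Fin n` is zero-based,
so the paper's `k` is `k+1` and `n−k+1` becomes `n−k`.) -/
theorem A_k_inverse (n : ℕ)
    (P : Fin n → Fin n → ((Fin n → ℂ) → ℂ) → ((Fin n → ℂ) → ℂ))
    (hP : ∀ j k f x, P j k f x =
      f (Function.update (Function.update x j (x j * x k)) k 1))
    (k : Fin n)
    (A B : ((Fin n → ℂ) → ℂ) → ((Fin n → ℂ) → ℂ))
    (hA : ∀ f x, A f x = (1 / (n : ℂ)) *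
      (((n : ℂ) - (k : ℕ)) * f x + ∑ j ∈ Finset.univ.filter (· < k), P j k f x))
    (hB : ∀ f x, B f x = (1 / ((n : ℂ) - (k : ℕ))) *
      ((n : ℂ) * f x - ∑ j ∈ Finset.univ.filter (· < k), P j k f x)) :
    (∀ f, A (B f) = f) ∧ (∀ f, B (A f) = f) := by
  have hn : 0 < n := k.pos
  have hnC : (n : ℂ) ≠ 0 := Nat.cast_ne_zero.mpr hn.ne'
  have hk : (k : ℕ) < n := k.isLt
  have hnk : (n : ℂ) - (k : ℕ) ≠ 0 := by
    have h : ((n - (k : ℕ) : ℕ) : ℂ) ≠ 0 :=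
      Nat.cast_ne_zero.mpr (Nat.sub_ne_zero_of_lt hk)
    rwa [Nat.cast_sub hk.le] at h
  have hcard : (Finset.univ.filter (· < k)).card = (k : ℕ) := by
    have : Finset.univ.filter (· < k) = Finset.Iio k := by
      ext j; simp [Finset.mem_Iio]
    rw [this, Fin.card_Iio]
  -- P l k acts trivially at points whose k-coordinate is 1
  have hfix : ∀ (l : Fin n) (g : (Fin n → ℂ) → ℂ) (x' : Fin n → ℂ),
      x' k = 1 → P l k g x' = g x' := by
    intro l g x' h1
    rw [hP]
    congr 1
    rw [h1, mul_one, Function.update_eq_self]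
    conv_lhs => rw [← h1]
    exact Function.update_eq_self k x'
  have hyk : ∀ (j : Fin n) (x : Fin n → ℂ), j ≠ k →
      (Function.update (Function.update x j (x j * x k)) k 1) k = 1 := by
    intro j x hjk; simp
  have hSy : ∀ (f : (Fin n → ℂ) → ℂ) (x' : Fin n → ℂ), x' k = 1 →
      ∑ l ∈ Finset.univ.filter (· < k), P l k f x' = ((k : ℕ) : ℂ) * f x' := by
    intro f x' h1
    rw [Finset.sum_congr rfl fun l _ => hfix l f x' h1, Finset.sum_const, hcard,
      nsmul_eq_mul]
  have hBfix : ∀ (f : (Fin n → ℂ) → ℂ) (x' : Fin n → ℂ), x' k = 1 →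
      B f x' = f x' := by
    intro f x' h1
    rw [hB, hSy f x' h1]
    field_simp
  have hAfix : ∀ (f : (Fin n → ℂ) → ℂ) (x' : Fin n → ℂ), x' k = 1 →
      A f x' = f x' := by
    intro f x' h1
    rw [hA, hSy f x' h1]
    field_simp
    ring
  have hPf : ∀ (j : Fin n), j ≠ k → ∀ (g f : (Fin n → ℂ) → ℂ),
      (∀ x', x' k = 1 → g x' = f x') → ∀ x, P j k g x = P j k f x := by
    intro j hjk g f hg x
    rw [hP, hP]
    exact hg _ (hyk j x hjk)
  constructor
  · intro f
    funext x
    rw [hA]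
    have hsum : ∑ j ∈ Finset.univ.filter (· < k), P j k (B f) x
        = ∑ j ∈ Finset.univ.filter (· < k), P j k f x := by
      refine Finset.sum_congr rfl fun j hj => ?_
      exact hPf j (Finset.mem_filter.mp hj).2.ne (B f) f (hBfix f) x
    rw [hsum, hB]
    field_simp
    ring
  · intro f
    funext x
    rw [hB]
    have hsum : ∑ j ∈ Finset.univ.filter (· < k), P j k (A f) x
        = ∑ j ∈ Finset.univ.filter (· < k), P j k f x := by
      refine Finset.sum_congr rfl fun j hj => ?_
      exact hPf j (Finset.mem_filter.mp hj).2.ne (A f) f (hAfix f) x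
    rw [hsum, hA]
    field_simp
    ring
end

section
/- For the polynomials E_λ(x) = e₁(x)^{λ₁−λ₂} e₂(x)^{λ₂−λ₃} ⋯ eₙ(x)^{λₙ}, the differential operators H_j = e_j(x) Σ_{i=1}^n [(−x_i)^{n−j} / ∏_{m≠i}(x_m − x_i)] ∂/∂x_i satisfy H_j E_λ = (λ_j − λ_{j+1}) E_λ for j = 1,…,n (with λ_{n+1} = 0). -/
open MvPolynomial
section AuxH
open Finset

lemma pderiv_finset_prod {σ : Type*} [DecidableEq σ] (i : σ) {ι : Type*} [DecidableEq ι]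
    (s : Finset ι) (f : ι → MvPolynomial σ ℂ) :
    pderiv i (∏ k ∈ s, f k) = ∑ k ∈ s, pderiv i (f k) * ∏ l ∈ s.erase k, f l := by
  induction s using Finset.induction with
  | empty => simp
  | @insert a s ha ih =>
    rw [Finset.prod_insert ha, (pderiv i).leibniz, Finset.sum_insert ha, ih,
      Finset.erase_insert ha, smul_eq_mul, smul_eq_mul, Finset.mul_sum,
      Finset.sum_congr rfl (fun k hk => ?_)]
    · ring
    · have hka : k ≠ a := fun h => ha (h ▸ hk)
      rw [Finset.erase_insert_of_ne hka.symm,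
        Finset.prod_insert (fun h => ha (Finset.mem_of_mem_erase h))]
      ring

lemma eval_pderiv_esymm (n : ℕ) (x : Fin n → ℂ) (i : Fin n) (k : ℕ) :
    eval x (pderiv i (esymm (Fin n) ℂ (k + 1))) =
      ∑ t ∈ (Finset.univ.erase i).powersetCard k, ∏ m ∈ t, x m := by
  rw [esymm, map_sum]
  have h1 : ∀ t : Finset (Fin n), pderiv i (∏ m ∈ t, (X m : MvPolynomial (Fin n) ℂ)) =
      if i ∈ t then ∏ m ∈ t.erase i, X m else 0 := by
    intro t
    rw [pderiv_finset_prod]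
    simp only [pderiv_X, Pi.single_apply]
    rw [Finset.sum_congr rfl (fun m _ => by rw [ite_mul, one_mul, zero_mul]),
      Finset.sum_ite_eq' t i (fun m => ∏ l ∈ t.erase m, (X l : MvPolynomial (Fin n) ℂ))]
  rw [Finset.sum_congr rfl (fun t _ => by rw [h1])]
  rw [Finset.sum_ite, Finset.sum_const_zero, add_zero]
  rw [map_sum]
  refine Finset.sum_bij' (fun t _ => t.erase i) (fun u _ => insert i u) ?_ ?_ ?_ ?_ ?_
  · intro t ht
    simp only [Finset.mem_filter, Finset.mem_powersetCard] at ht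
    simp only [Finset.mem_powersetCard]
    constructor
    · intro a ha
      simp only [Finset.mem_erase] at ha ⊢
      exact ⟨ha.1, ht.1.1 ha.2⟩
    · rw [Finset.card_erase_of_mem ht.2, ht.1.2]
      omega
  · intro u hu
    simp only [Finset.mem_powersetCard] at hu
    simp only [Finset.mem_filter, Finset.mem_powersetCard]
    have hiu : i ∉ u := fun h => (Finset.mem_erase.mp (hu.1 h)).1 rfl
    refine ⟨⟨fun a ha => ?_, ?_⟩, Finset.mem_insert_self i u⟩
    · rcases Finset.mem_insert.mp ha with h | h
      · exact h ▸ Finset.mem_univ i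
      · exact Finset.mem_univ a
    · rw [Finset.card_insert_of_notMem hiu, hu.2]
  · intro t ht
    simp only [Finset.mem_filter] at ht
    exact Finset.insert_erase ht.2
  · intro u hu
    simp only [Finset.mem_powersetCard] at hu
    have hiu : i ∉ u := fun h => (Finset.mem_erase.mp (hu.1 h)).1 rfl
    exact Finset.erase_insert hiu
  · intro t ht
    simp only [map_prod, MvPolynomial.eval_X]


lemma lagrange_coeff (n : ℕ) (x : Fin n → ℂ) (hx : Function.Injective x)
    (r c : ℕ) (hr : r < n) (hc : c < n) :
    ∑ i : Fin n, x i ^ r * (∏ m ∈ Finset.univ.erase i, (x i - x m))⁻¹ *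
        ((Finset.univ.erase i).val.map x).esymm (n - 1 - c)
      = if c = r then (-1 : ℂ) ^ (n - 1 - c) else 0 := by
  have hinj : Set.InjOn x (Finset.univ : Finset (Fin n)) := fun a _ b _ h => hx h
  have hcard : #(Finset.univ : Finset (Fin n)) = n := by simp
  have hdeg : (Polynomial.X ^ r : Polynomial ℂ).degree < #(Finset.univ : Finset (Fin n)) := by
    rw [Polynomial.degree_X_pow, hcard]
    exact_mod_cast hr
  have h := Lagrange.eq_interpolate hinj hdeg
  have hco := congrArg (fun p : Polynomial ℂ => p.coeff c) h
  simp only [Lagrange.interpolate_apply, Polynomial.coeff_X_pow,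
    Polynomial.finset_sum_coeff] at hco
  -- basis expansion
  have hbasis : ∀ i : Fin n, Lagrange.basis Finset.univ x i =
      Polynomial.C ((∏ m ∈ Finset.univ.erase i, (x i - x m))⁻¹) *
        ∏ m ∈ Finset.univ.erase i, (Polynomial.X - Polynomial.C (x m)) := by
    intro i
    rw [Lagrange.basis, ← Finset.prod_inv_distrib, map_prod, ← Finset.prod_mul_distrib]
    rfl
  have hcoeff : ∀ i : Fin n,
      (∏ m ∈ Finset.univ.erase i, (Polynomial.X - Polynomial.C (x m))).coeff c =
        (-1 : ℂ) ^ (n - 1 - c) * ((Finset.univ.erase i).val.map x).esymm (n - 1 - c) := by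
    intro i
    have hcardm : Multiset.card ((Finset.univ.erase i).val.map x) = n - 1 := by
      simp [Finset.card_erase_of_mem]
    have hprod : ∏ m ∈ Finset.univ.erase i, (Polynomial.X - Polynomial.C (x m))
        = (((Finset.univ.erase i).val.map x).map fun t => Polynomial.X - Polynomial.C t).prod := by
      rw [Multiset.map_map]
      rfl
    rw [hprod, Multiset.prod_X_sub_C_coeff _ (by omega : c ≤ Multiset.card ((Finset.univ.erase i).val.map x)), hcardm]
  rw [Finset.sum_congr rfl (fun i _ => by
    rw [hbasis i, Polynomial.eval_pow, Polynomial.eval_X, Polynomial.coeff_C_mul,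
      Polynomial.coeff_C_mul, hcoeff i])] at hco
  rw [← Finset.sum_congr rfl (fun i (_ : i ∈ Finset.univ) => rfl)] at hco
  have hpow : ((-1 : ℂ) ^ (n - 1 - c)) * ((-1 : ℂ) ^ (n - 1 - c)) = 1 := by
    rw [← mul_pow]; norm_num
  calc ∑ i : Fin n, x i ^ r * (∏ m ∈ Finset.univ.erase i, (x i - x m))⁻¹ *
        ((Finset.univ.erase i).val.map x).esymm (n - 1 - c)
      = (-1 : ℂ) ^ (n - 1 - c) * ∑ i : Fin n, x i ^ r *
          ((∏ m ∈ Finset.univ.erase i, (x i - x m))⁻¹ *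
            ((-1 : ℂ) ^ (n - 1 - c) * ((Finset.univ.erase i).val.map x).esymm (n - 1 - c))) := by
        rw [Finset.mul_sum]
        refine Finset.sum_congr rfl fun i _ => ?_
        linear_combination (-(x i ^ r * (∏ m ∈ Finset.univ.erase i, (x i - x m))⁻¹ *
          ((Finset.univ.erase i).val.map x).esymm (n - 1 - c))) * hpow
    _ = if c = r then (-1 : ℂ) ^ (n - 1 - c) else 0 := by
        rw [← hco]
        split <;> simp



lemma key_delta (n : ℕ) (x : Fin n → ℂ) (hx : Function.Injective x) (j k : Fin n)
    (hL : ∀ (r c : ℕ), r < n → c < n →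
      ∑ i : Fin n, x i ^ r * (∏ m ∈ Finset.univ.erase i, (x i - x m))⁻¹ *
          ((Finset.univ.erase i).val.map x).esymm (n - 1 - c)
        = if c = r then (-1 : ℂ) ^ (n - 1 - c) else 0)
    (hD : ∀ i : Fin n, eval x (pderiv i (esymm (Fin n) ℂ ((k : ℕ) + 1))) =
      ∑ t ∈ (Finset.univ.erase i).powersetCard (k : ℕ), ∏ m ∈ t, x m) :
    ∑ i : Fin n, ((-(x i)) ^ (n - ((j : ℕ) + 1)) /
        ∏ m ∈ Finset.univ.erase i, (x m - x i)) *
      eval x (pderiv i (esymm (Fin n) ℂ ((k : ℕ) + 1)))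
    = if j = k then 1 else 0 := by
  have hjn : (j : ℕ) < n := j.isLt
  have hkn : (k : ℕ) < n := k.isLt
  have he : ∀ i : Fin n, eval x (pderiv i (esymm (Fin n) ℂ ((k : ℕ) + 1))) =
      ((Finset.univ.erase i).val.map x).esymm (n - 1 - (n - 1 - (k : ℕ))) := by
    intro i
    have h1 : n - 1 - (n - 1 - (k : ℕ)) = (k : ℕ) := by omega
    rw [hD i, h1, Finset.esymm_map_val]
  have hsign : ∀ i : Fin n, ∏ m ∈ Finset.univ.erase i, (x m - x i)
      = (-1 : ℂ) ^ (n - 1) * ∏ m ∈ Finset.univ.erase i, (x i - x m) := by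
    intro i
    rw [Finset.prod_congr rfl (fun m _ => (by ring : x m - x i = (-1) * (x i - x m))),
      Finset.prod_mul_distrib, Finset.prod_const, Finset.card_erase_of_mem (Finset.mem_univ i),
      Finset.card_univ, Fintype.card_fin]
  have step : ∀ i : Fin n,
      ((-(x i)) ^ (n - ((j : ℕ) + 1)) / ∏ m ∈ Finset.univ.erase i, (x m - x i)) *
        eval x (pderiv i (esymm (Fin n) ℂ ((k : ℕ) + 1)))
      = ((-1 : ℂ) ^ (n - ((j : ℕ) + 1)) * (-1 : ℂ) ^ (n - 1)) *
        (x i ^ (n - ((j : ℕ) + 1)) * (∏ m ∈ Finset.univ.erase i, (x i - x m))⁻¹ *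
          ((Finset.univ.erase i).val.map x).esymm (n - 1 - (n - 1 - (k : ℕ)))) := by
    intro i
    rw [he i, hsign i, neg_pow, div_eq_mul_inv, mul_inv, ← inv_pow, inv_neg_one]
    ring
  rw [Finset.sum_congr rfl (fun i _ => step i), ← Finset.mul_sum,
    hL (n - ((j : ℕ) + 1)) (n - 1 - (k : ℕ)) (by omega) (by omega)]
  have hiff : (n - 1 - (k : ℕ) = n - ((j : ℕ) + 1)) ↔ j = k := by
    rw [Fin.ext_iff]; omega
  by_cases hjk : j = k
  · rw [if_pos (hiff.mpr hjk), if_pos hjk]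
    have h1 : n - 1 - (n - 1 - (k : ℕ)) = (k : ℕ) := by omega
    rw [h1, ← pow_add, ← pow_add]
    have h2 : n - ((j : ℕ) + 1) + (n - 1) + (k : ℕ) = 2 * (n - 1) := by
      subst hjk; omega
    rw [h2, pow_mul]
    norm_num
  · rw [if_neg (fun h => hjk (hiff.mp h)), if_neg hjk, mul_zero]

end AuxH

/-- For `E_λ = e₁^{λ₁−λ₂} ⋯ eₙ^{λₙ}`, the first-order operators
`H_j = e_j(x) ∑_i (−x_i)^{n−j} / ∏_{m≠i}(x_m−x_i) ∂/∂x_i` satisfy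
`H_j E_λ = (λ_j − λ_{j+1}) E_λ` (with `λ_{n+1} = 0`), at every point with
pairwise distinct coordinates. -/
theorem H_eigen_E (n : ℕ) (lam : Fin n → ℕ) (hlam : Antitone lam)
    (nxt : Fin n → ℕ)
    (hnxt : ∀ j : Fin n, nxt j = if h : (j : ℕ) + 1 < n then lam ⟨(j : ℕ) + 1, h⟩ else 0)
    (E : MvPolynomial (Fin n) ℂ)
    (hE : E = ∏ j : Fin n, (esymm (Fin n) ℂ ((j : ℕ) + 1)) ^ (lam j - nxt j))
    (j : Fin n) (x : Fin n → ℂ) (hx : Function.Injective x) :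
    eval x (esymm (Fin n) ℂ ((j : ℕ) + 1)) *
        ∑ i : Fin n, ((-(x i)) ^ (n - ((j : ℕ) + 1)) /
            ∏ m ∈ Finset.univ.erase i, (x m - x i)) * eval x (pderiv i E)
      = ((lam j : ℂ) - (nxt j : ℂ)) * eval x E := by
  classical
  set P : Fin n → ℂ := fun k => eval x (esymm (Fin n) ℂ ((k : ℕ) + 1)) with hP
  set mm : Fin n → ℕ := fun k => lam k - nxt k with hmm
  have hle : nxt j ≤ lam j := by
    rw [hnxt j]
    split
    · exact hlam (by simp [Fin.le_def])
    · exact Nat.zero_le _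
  -- expand the derivative of E
  have hDi : ∀ i : Fin n, eval x (pderiv i E) =
      ∑ k : Fin n, (mm k : ℂ) * (P k) ^ (mm k - 1) *
        eval x (pderiv i (esymm (Fin n) ℂ ((k : ℕ) + 1))) *
        ∏ l ∈ Finset.univ.erase k, (P l) ^ (mm l) := by
    intro i
    rw [hE, pderiv_finset_prod, map_sum]
    refine Finset.sum_congr rfl fun k _ => ?_
    rw [pderiv_pow]
    simp only [MvPolynomial.eval_mul, MvPolynomial.eval_pow, MvPolynomial.eval_prod, map_natCast]
    rfl
  have hkey : ∀ k : Fin n,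
      ∑ i : Fin n, ((-(x i)) ^ (n - ((j : ℕ) + 1)) /
          ∏ m ∈ Finset.univ.erase i, (x m - x i)) *
        eval x (pderiv i (esymm (Fin n) ℂ ((k : ℕ) + 1)))
      = if j = k then 1 else 0 := fun k =>
    key_delta n x hx j k (fun r c hr hc => lagrange_coeff n x hx r c hr hc)
      (fun i => eval_pderiv_esymm n x i (k : ℕ))
  have hswap :
      ∑ i : Fin n, ((-(x i)) ^ (n - ((j : ℕ) + 1)) /
          ∏ m ∈ Finset.univ.erase i, (x m - x i)) * eval x (pderiv i E)
      = ∑ k : Fin n, ((mm k : ℂ) * (P k) ^ (mm k - 1) *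
          ∏ l ∈ Finset.univ.erase k, (P l) ^ (mm l)) *
          ∑ i : Fin n, ((-(x i)) ^ (n - ((j : ℕ) + 1)) /
            ∏ m ∈ Finset.univ.erase i, (x m - x i)) *
          eval x (pderiv i (esymm (Fin n) ℂ ((k : ℕ) + 1))) := by
    rw [Finset.sum_congr rfl (fun i _ => by rw [hDi i, Finset.mul_sum]), Finset.sum_comm]
    refine Finset.sum_congr rfl fun k _ => ?_
    rw [Finset.mul_sum]
    refine Finset.sum_congr rfl fun i _ => ?_
    ring
  rw [hswap, Finset.sum_congr rfl (fun k _ => by rw [hkey k, mul_ite, mul_one, mul_zero]),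
    Finset.sum_ite_eq]
  simp only [Finset.mem_univ, if_true]
  have hevalE : eval x E = ∏ l : Fin n, (P l) ^ (mm l) := by
    rw [hE, MvPolynomial.eval_prod]
    exact Finset.prod_congr rfl fun l _ => by rw [MvPolynomial.eval_pow]
  have hcast : ((lam j : ℂ) - (nxt j : ℂ)) = ((mm j : ℕ) : ℂ) := by
    rw [hmm]
    push_cast [Nat.cast_sub hle]
    ring
  rw [hcast, hevalE]
  by_cases h0 : mm j = 0
  · simp [h0]
  · have h1 : P j * P j ^ (mm j - 1) = P j ^ (mm j) := by
      rw [← pow_succ']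
      congr 1
      omega
    rw [← Finset.mul_prod_erase Finset.univ _ (Finset.mem_univ j), ← h1]
    ring
end

section
/- For a partition λ with μ = λ + δ (δ = (n−1,…,1,0)), the polynomial φ_λ(z) = Σ_{j=1}^n c_j z^{μ_j} with c_j = ∏_{k≠j}(μ_j − μ_k)^{-1} is divisible by (z−1)^{n−1}, i.e., its derivatives of orders 0 through n−2 vanish at z = 1. -/
open Polynomial Finset

/-- Cast of descending factorial as a product in ℂ. -/
lemma cast_descFactorial_complex (m k : ℕ) :
    (m.descFactorial k : ℂ) = ∏ i ∈ Finset.range k, ((m : ℂ) - (i : ℂ)) := by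
  induction k with
  | zero => simp
  | succ k ih =>
    rcases lt_or_ge m (k + 1) with h | h
    · rw [Nat.descFactorial_of_lt h, Nat.cast_zero]
      refine (Finset.prod_eq_zero (Finset.mem_range.mpr h) ?_).symm
      simp
    · rw [Nat.descFactorial_succ, Finset.prod_range_succ, Nat.cast_mul, ih,
        Nat.cast_sub (Nat.lt_of_succ_le h).le, mul_comm]

/-- Leading coefficient of the Lagrange basis polynomial. -/
lemma leadingCoeff_lagrange_basis {F : Type*} [Field F] {ι : Type*} [DecidableEq ι]
    (s : Finset ι) (v : ι → F) (i : ι) (hvs : Set.InjOn v s) (hi : i ∈ s) :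
    (Lagrange.basis s v i).leadingCoeff = ∏ j ∈ s.erase i, (v i - v j)⁻¹ := by
  rw [Lagrange.basis, leadingCoeff_prod]
  refine Finset.prod_congr rfl fun j hj => ?_
  have hij : v i ≠ v j := by
    intro h
    exact ((Finset.mem_erase.mp hj).1 (hvs (Finset.mem_of_mem_erase hj) hi h.symm)).elim
  · rw [Lagrange.basisDivisor, leadingCoeff_mul, leadingCoeff_C, leadingCoeff_X_sub_C, mul_one]

/-- Key lemma: for distinct points, the weighted sum of values of a low-degree
polynomial with Lagrange weights vanishes. -/
lemma lagrange_weight_sum_eq_zero (n : ℕ) (hn : 1 ≤ n) (v : Fin n → ℂ)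
    (hv : Function.Injective v) (Q : ℂ[X]) (hQ : Q.degree < (n - 1 : ℕ)) :
    ∑ j : Fin n, (∏ k ∈ Finset.univ.erase j, (v j - v k)⁻¹) * Q.eval (v j) = 0 := by
  have hvs : Set.InjOn v (Finset.univ : Finset (Fin n)) := fun a _ b _ h => hv h
  have hcard : (Finset.univ : Finset (Fin n)).card = n := Finset.card_univ.trans (Fintype.card_fin n)
  have hQn : Q.degree < ((Finset.univ : Finset (Fin n)).card : ℕ) := by
    rw [hcard]
    exact lt_of_lt_of_le hQ (by exact_mod_cast Nat.cast_le.mpr (Nat.sub_le n 1))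
  have hinterp := Lagrange.eq_interpolate hvs hQn
  have hcoeff := congrArg (fun p => Polynomial.coeff p (n - 1)) hinterp
  simp only [Lagrange.interpolate_apply, Polynomial.finset_sum_coeff,
    Polynomial.coeff_C_mul] at hcoeff
  have hQc : Q.coeff (n - 1) = 0 := Polynomial.coeff_eq_zero_of_degree_lt hQ
  rw [hQc] at hcoeff
  have hbasis : ∀ j : Fin n, (Lagrange.basis Finset.univ v j).coeff (n - 1)
      = ∏ k ∈ Finset.univ.erase j, (v j - v k)⁻¹ := by
    intro j
    have hdeg : (Lagrange.basis Finset.univ v j).degree = ((Finset.univ.card - 1 : ℕ) : ℕ) :=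
      Lagrange.degree_basis hvs (Finset.mem_univ j)
    have hnat : (Lagrange.basis Finset.univ v j).natDegree = n - 1 := by
      rw [Polynomial.natDegree_eq_of_degree_eq_some hdeg, hcard]
    rw [← hnat, Polynomial.coeff_natDegree]
    exact leadingCoeff_lagrange_basis _ _ _ hvs (Finset.mem_univ j)
  calc ∑ j : Fin n, (∏ k ∈ Finset.univ.erase j, (v j - v k)⁻¹) * Q.eval (v j)
      = ∑ j : Fin n, Q.eval (v j) * (Lagrange.basis Finset.univ v j).coeff (n - 1) := by
        refine Finset.sum_congr rfl fun j _ => ?_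
        rw [hbasis j, mul_comm]
    _ = 0 := by rw [← hcoeff]

lemma iteratedDeriv_polynomial_eval (p : ℂ[X]) (k : ℕ) :
    iteratedDeriv k (fun x => p.eval x) = fun x => ((Polynomial.derivative)^[k] p).eval x := by
  induction k generalizing p with
  | zero => simp
  | succ k ih =>
    funext x
    rw [iteratedDeriv_succ, ih, Function.iterate_succ_apply']
    exact Polynomial.deriv (p := (Polynomial.derivative)^[k] p)

/-- For strictly decreasing nonnegative integers
`μ₁ > … > μₙ` (coming from `μ = λ + δ`), the polynomial
`φ_λ(z) = ∑_j c_j z^{μ_j}`, `c_j = ∏_{k≠j}(μ_j−μ_k)⁻¹`, is divisible by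
`(z−1)^{n−1}`: its derivatives of orders `0,…,n−2` vanish at `z = 1`. -/
theorem phi_derivatives_vanish (n : ℕ) (mu : Fin n → ℕ) (hmu : StrictAnti mu)
    (phi : ℂ → ℂ)
    (hphi : ∀ z, phi z = ∑ j : Fin n,
      (∏ k ∈ Finset.univ.erase j, ((mu j : ℂ) - (mu k : ℂ))⁻¹) * z ^ mu j)
    (k : ℕ) (hk : k + 1 < n) :
    iteratedDeriv k phi 1 = 0 := by
  set v : Fin n → ℂ := fun j => (mu j : ℂ) with hv
  set c : Fin n → ℂ := fun j => ∏ l ∈ Finset.univ.erase j, (v j - v l)⁻¹ with hc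
  set P : ℂ[X] := ∑ j : Fin n, Polynomial.C (c j) * Polynomial.X ^ (mu j) with hP
  have hphiP : phi = fun z => P.eval z := by
    funext z
    rw [hphi z, hP]
    simp [Polynomial.eval_finset_sum, hc, hv, Finset.prod_inv_distrib]
  rw [hphiP, iteratedDeriv_polynomial_eval]
  have hD : (Polynomial.derivative)^[k] P
      = ∑ j : Fin n, Polynomial.C (c j) *
          (((mu j).descFactorial k : ℂ[X]) * Polynomial.X ^ (mu j - k)) := by
    rw [hP, Polynomial.iterate_derivative_sum]
    refine Finset.sum_congr rfl fun j _ => ?_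
    rw [Polynomial.iterate_derivative_C_mul, Polynomial.iterate_derivative_X_pow_eq_natCast_mul]
  rw [hD]
  simp only [Polynomial.eval_finset_sum, Polynomial.eval_mul, Polynomial.eval_C,
    Polynomial.eval_pow, Polynomial.eval_X, one_pow, mul_one, Polynomial.eval_natCast]
  -- now goal: ∑ j, c j * (descFactorial (mu j) k) = 0
  set Q : ℂ[X] := ∏ i ∈ Finset.range k, (Polynomial.X - Polynomial.C (i : ℂ)) with hQ
  have hQeval : ∀ j : Fin n, Q.eval (v j) = ((mu j).descFactorial k : ℂ) := by
    intro j
    rw [hQ, Polynomial.eval_prod, cast_descFactorial_complex]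
    simp [hv]
  have hm : Q.Monic := Polynomial.monic_prod_of_monic _ _ fun i _ => Polynomial.monic_X_sub_C _
  have hnat : Q.natDegree = k := by
    rw [hQ, Polynomial.natDegree_prod_of_monic _ _ fun i _ => Polynomial.monic_X_sub_C _]
    simp only [Polynomial.natDegree_X_sub_C]
    simp
  have hQdeg : Q.degree < (n - 1 : ℕ) := by
    rw [Polynomial.degree_eq_natDegree hm.ne_zero, hnat]
    exact_mod_cast Nat.lt_sub_of_add_lt hk
  have hvinj : Function.Injective v := by
    intro a b h
    exact hmu.injective (Nat.cast_injective h)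
  have hkey := lagrange_weight_sum_eq_zero n (by omega) v hvinj Q hQdeg
  calc ∑ j : Fin n, c j * ((mu j).descFactorial k : ℂ)
      = ∑ j : Fin n, (∏ l ∈ Finset.univ.erase j, (v j - v l)⁻¹) * Q.eval (v j) := by
        refine Finset.sum_congr rfl fun j _ => ?_
        rw [hQeval j, hc]
    _ = 0 := hkey
end

section
/- For real numbers v₁ < v₂ < … < v_{m+1}, the iterated integral ∫_{v₁}^{v₂} du₁ ⋯ ∫_{v_m}^{v_{m+1}} du_m of the Vandermonde determinant Δ_m(u) = ∏_{i<j}(u_i − u_j) equals ((−1)^m / m!) · Δ_{m+1}(v). -/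
open MeasureTheory

lemma sign_prod (n : ℕ) (w : Fin n → ℝ) :
    ∏ i, ∏ j ∈ Finset.univ.filter (fun j => i < j), (w i - w j)
      = (-1 : ℝ)^(∑ i ∈ Finset.range n, i) * ∏ i, ∏ j ∈ Finset.Ioi i, (w j - w i) := by
  have h1 : ∀ i : Fin n, Finset.univ.filter (fun j => i < j) = Finset.Ioi i := by
    intro i; ext j; simp
  simp_rw [h1]
  have h2 : ∀ i : Fin n, ∏ j ∈ Finset.Ioi i, (w i - w j)
      = (-1:ℝ)^(n - 1 - (i:ℕ)) * ∏ j ∈ Finset.Ioi i, (w j - w i) := by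
    intro i
    rw [← Fin.card_Ioi, ← Finset.prod_const, ← Finset.prod_mul_distrib]
    congr 1; ext j; ring
  simp_rw [h2]
  rw [Finset.prod_mul_distrib, Finset.prod_pow_eq_pow_sum]
  congr 2
  rw [Fin.sum_univ_eq_sum_range]
  exact Finset.sum_range_reflect (fun i => i) n

lemma det_telescope {m : ℕ} (M : Matrix (Fin (m+1)) (Fin (m+1)) ℝ) (h : ∀ i, M i 0 = 1) :
    M.det = Matrix.det (Matrix.of fun i j : Fin m => M i.succ j.succ - M i.castSucc j.succ) := by
  classical
  set L : Matrix (Fin (m+1)) (Fin (m+1)) ℝ :=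
    Matrix.of (fun i j => if i = j then (1:ℝ) else if (i:ℕ) = (j:ℕ)+1 then -1 else 0) with hL
  have hdetL : L.det = 1 := by
    have ht : L.BlockTriangular OrderDual.toDual := by
      intro i j hij
      have : i < j := hij
      simp only [hL, Matrix.of_apply]
      rw [if_neg, if_neg]
      · omega
      · exact ne_of_lt this
    rw [Matrix.det_of_lowerTriangular L ht]
    simp [hL]
  have key : M.det = (L * M).det := by rw [Matrix.det_mul, hdetL, one_mul]
  have hrow0 : ∀ j, (L * M) 0 j = M 0 j := by
    intro j
    rw [Matrix.mul_apply]
    rw [Finset.sum_eq_single (0 : Fin (m+1))]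
    · simp [hL]
    · intro k _ hk
      have : ¬ ((0:Fin (m+1)) = k) := fun hh => hk hh.symm
      simp only [hL, Matrix.of_apply]
      rw [if_neg this, if_neg (by simp), zero_mul]
    · simp
  have hrow : ∀ (i : Fin m) (j : Fin (m+1)),
      (L * M) i.succ j = M i.succ j - M i.castSucc j := by
    intro i j
    rw [Matrix.mul_apply]
    have hsplit : ∀ k : Fin (m+1), L i.succ k
        = (if k = i.succ then (1:ℝ) else 0) + (if k = i.castSucc then (-1:ℝ) else 0) := by
      intro k
      have hi := i.isLt
      have hk := k.isLt
      simp only [hL, Matrix.of_apply, Fin.ext_iff, Fin.val_succ, Fin.coe_castSucc]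
      split_ifs <;> first | (exfalso; omega) | norm_num
    simp_rw [hsplit, add_mul, Finset.sum_add_distrib, ite_mul, one_mul, zero_mul, neg_one_mul]
    rw [Finset.sum_ite_eq' , Finset.sum_ite_eq']
    simp [sub_eq_add_neg]
  rw [key, Matrix.det_succ_column_zero]
  rw [Finset.sum_eq_single (0 : Fin (m+1))]
  · rw [hrow0 0, h 0]
    simp only [Fin.val_zero, pow_zero, one_mul, mul_one]
    congr 1
    ext i j
    simp [Matrix.submatrix, Fin.succAbove_zero, hrow]
  · intro k _ hk
    obtain ⟨i, rfl⟩ := Fin.exists_succ_eq.mpr (by simpa using hk)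
    rw [hrow, h, h]
    ring
  · simp

lemma det_N (m : ℕ) (v : Fin (m+1) → ℝ) :
    Matrix.det (Matrix.of fun i j : Fin (m+1) =>
        if (j:ℕ) = 0 then (1:ℝ) else v i ^ (j:ℕ) / (j:ℕ))
      = ((m.factorial : ℝ))⁻¹ * ∏ i, ∏ j ∈ Finset.Ioi i, (v j - v i) := by
  have hfac : (Matrix.of fun i j : Fin (m+1) =>
        if (j:ℕ) = 0 then (1:ℝ) else v i ^ (j:ℕ) / (j:ℕ))
      = Matrix.vandermonde v * Matrix.diagonal
          (fun j : Fin (m+1) => if (j:ℕ) = 0 then (1:ℝ) else ((j:ℕ):ℝ)⁻¹) := by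
    ext i j
    rw [Matrix.mul_diagonal]
    simp only [Matrix.of_apply, Matrix.vandermonde_apply]
    split_ifs with hj
    · rw [hj]; norm_num
    · rw [div_eq_mul_inv]
  rw [hfac, Matrix.det_mul, Matrix.det_diagonal, Matrix.det_vandermonde, mul_comm]
  congr 1
  have hf : ∏ x : Fin m, ((((x:ℕ):ℝ))+1)⁻¹ = ((m.factorial:ℝ))⁻¹ := by
    rw [Finset.prod_inv_distrib, ← Finset.prod_range_add_one_eq_factorial]
    rw [Fin.prod_univ_eq_prod_range (fun k => (((k:ℕ):ℝ)+1)) m]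
    push_cast
    ring
  rw [Fin.prod_univ_succ]
  simpa using hf

lemma integral_box {m : ℕ} (s : Fin m → Set ℝ) (hs : ∀ i, MeasurableSet (s i))
    (g : Fin m → ℝ → ℝ) :
    ∫ x : Fin m → ℝ in Set.univ.pi s, ∏ i, g i (x i) = ∏ i, ∫ t in s i, g i t := by
  rw [← integral_indicator (MeasurableSet.univ_pi hs)]
  have key : (Set.univ.pi s).indicator (fun x : Fin m → ℝ => ∏ i, g i (x i))
      = fun x => ∏ i, (s i).indicator (g i) (x i) := by
    funext x
    by_cases hx : x ∈ Set.univ.pi s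
    · rw [Set.indicator_of_mem hx]
      exact Finset.prod_congr rfl fun i _ =>
        (Set.indicator_of_mem (hx i (Set.mem_univ i)) (g i)).symm
    · rw [Set.indicator_of_notMem hx]
      have : ∃ i, x i ∉ s i := by
        by_contra hc
        push_neg at hc
        exact hx fun i _ => hc i
      obtain ⟨i, hi⟩ := this
      exact (Finset.prod_eq_zero (Finset.mem_univ i)
        (Set.indicator_of_notMem hi (g i))).symm
  rw [key, volume_pi]
  beta_reduce
  rw [MeasureTheory.integral_fintype_prod_eq_prod (ι := Fin m) (fun i => (s i).indicator (g i))]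
  exact Finset.prod_congr rfl fun i _ => integral_indicator (hs i)

/-- For `v₁ < v₂ < … < v_{m+1}`, the iterated integral of the
Vandermonde determinant `Δ_m(u) = ∏_{i<j}(u_i−u_j)`, with each `u_i` ranging
over `[v_i, v_{i+1}]`, equals `((−1)^m / m!) · Δ_{m+1}(v)`. -/
theorem integral_vandermonde (m : ℕ) (v : Fin (m + 1) → ℝ) (hv : StrictMono v) :
    ∫ u : Fin m → ℝ in Set.univ.pi (fun i : Fin m => Set.Icc (v i.castSucc) (v i.succ)),
        ∏ i : Fin m, ∏ j ∈ Finset.univ.filter (fun j : Fin m => i < j), (u i - u j)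
      = ((-1 : ℝ) ^ m / (m.factorial : ℝ)) *
        ∏ i : Fin (m + 1), ∏ j ∈ Finset.univ.filter (fun j : Fin (m + 1) => i < j),
          (v i - v j) := by
  classical
  set S : Set (Fin m → ℝ) :=
    Set.univ.pi (fun i : Fin m => Set.Icc (v i.castSucc) (v i.succ)) with hS
  set C : Matrix (Fin m) (Fin m) ℝ := Matrix.of (fun i j =>
    (v i.succ ^ ((j:ℕ)+1) - v i.castSucc ^ ((j:ℕ)+1)) / (((j:ℕ):ℝ)+1)) with hC
  have hle : ∀ i : Fin m, v i.castSucc ≤ v i.succ := fun i => (hv i.castSucc_lt_succ).le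
  -- the integrand rewritten via permutations
  have h1 : ∀ u : Fin m → ℝ, ∏ i, ∏ j ∈ Finset.Ioi i, (u j - u i)
      = ∑ σ : Equiv.Perm (Fin m),
          ((Equiv.Perm.sign σ : ℤ) : ℝ) * ∏ i, (u i) ^ ((σ i : Fin m) : ℕ) := by
    intro u
    rw [← Matrix.det_vandermonde u, ← Matrix.det_transpose, Matrix.det_apply']
    rfl
  have hScompact : IsCompact S := isCompact_univ_pi fun i => isCompact_Icc
  have hkey : ∫ u in S, ∏ i, ∏ j ∈ Finset.Ioi i, (u j - u i) = C.det := by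
    simp_rw [h1]
    rw [integral_finset_sum]
    · have h2 : ∀ σ : Equiv.Perm (Fin m),
          ∫ u in S, ((Equiv.Perm.sign σ : ℤ) : ℝ) * ∏ i, (u i) ^ ((σ i : Fin m) : ℕ)
            = ((Equiv.Perm.sign σ : ℤ) : ℝ) * ∏ i, C i (σ i) := by
        intro σ
        rw [MeasureTheory.integral_const_mul]
        congr 1
        rw [hS, integral_box _ (fun i => measurableSet_Icc)
          (fun i t => t ^ ((σ i : Fin m) : ℕ))]
        refine Finset.prod_congr rfl fun i _ => ?_
        rw [MeasureTheory.integral_Icc_eq_integral_Ioc,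
          ← intervalIntegral.integral_of_le (hle i), integral_pow]
        simp [hC]
      simp_rw [h2]
      rw [← Matrix.det_transpose C, Matrix.det_apply']
      rfl
    · intro σ _
      apply Integrable.const_mul
      apply ContinuousOn.integrableOn_compact hScompact
      exact (continuous_finset_prod _ fun i _ =>
        (continuous_apply i).pow _).continuousOn
  -- compute C.det
  have hCdet : C.det = ((m.factorial : ℝ))⁻¹ * ∏ i, ∏ j ∈ Finset.Ioi i, (v j - v i) := by
    rw [← det_N m v, det_telescope _ (fun i => by simp)]
    congr 1
    ext i j
    simp only [Matrix.of_apply, hC, Fin.val_succ]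
    rw [if_neg (Nat.succ_ne_zero _), if_neg (Nat.succ_ne_zero _)]
    push_cast
    rw [sub_div]
  rw [sign_prod (m+1) v]
  simp_rw [sign_prod m]
  rw [MeasureTheory.integral_const_mul, hkey, hCdet, Finset.sum_range_succ]
  set P := ∏ i, ∏ j ∈ Finset.Ioi i, (v j - v i) with hP
  set a := ∑ i ∈ Finset.range m, i with ha
  have h2 : ((-1:ℝ))^m * (-1)^m = 1 := by
    rw [← mul_pow]; norm_num
  have hfact : (m.factorial : ℝ) ≠ 0 := Nat.cast_ne_zero.mpr m.factorial_ne_zero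
  rw [pow_add]
  field_simp
  linear_combination (-P) * h2
end

section
/- Let Kₙ = ∏_{i<j}(D_i − D_j) with D_i = x_i ∂/∂x_i, and let φ_λ(z) = Σ_{j=1}^n c_j z^{μ_j} with c_j = ∏_{k≠j}(μ_j − μ_k)^{-1}, μ = λ + δ. Then Kₙ applied to ∏_{i=1}^n φ_λ(x_i) equals (c₁⋯cₙ) Δₙ(μ) · a_μ(x) = (−1)^{n(n−1)/2} a_μ(x)/Δₙ(μ), where a_μ(x) = det(x_i^{μ_j}). -/
open Finset

section Aux

variable {n : ℕ}

private lemma hasFDerivAt_mono (m : ℕ) (k : Fin n) (x : Fin n → ℂ) :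
    HasFDerivAt (fun y : Fin n → ℂ => y k ^ m)
      ((((m : ℂ) * x k ^ (m - 1)) • ContinuousLinearMap.proj k : (Fin n → ℂ) →L[ℂ] ℂ)) x := by
  have h1 : HasFDerivAt (fun y : Fin n → ℂ => y k)
      (ContinuousLinearMap.proj k : (Fin n → ℂ) →L[ℂ] ℂ) x :=
    hasFDerivAt_apply k x
  exact (hasDerivAt_pow m (x k)).comp_hasFDerivAt x h1

private lemma hasFDerivAt_comb (mu : Fin n → ℕ) (a : (Fin n → Fin n) → ℂ) (x : Fin n → ℂ) :
    HasFDerivAt (fun y : Fin n → ℂ => ∑ g : Fin n → Fin n, a g * ∏ k, y k ^ mu (g k))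
      (∑ g : Fin n → Fin n, a g • ∑ k : Fin n,
        (∏ j ∈ Finset.univ.erase k, x j ^ mu (g j)) •
          ((((mu (g k) : ℂ) * x k ^ (mu (g k) - 1)) • ContinuousLinearMap.proj k :
            (Fin n → ℂ) →L[ℂ] ℂ))) x := by
  apply HasFDerivAt.fun_sum
  intro g _
  apply HasFDerivAt.const_mul
  exact HasFDerivAt.finset_prod (fun k _ => hasFDerivAt_mono (mu (g k)) k x)


private lemma euler_pow (x : ℂ) (m : ℕ) : x * ((m : ℂ) * x ^ (m - 1)) = (m : ℂ) * x ^ m := by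
  cases m with
  | zero => simp
  | succ k => push_cast; rw [pow_succ]; ring

private lemma euler_comb (mu : Fin n → ℕ) (a : (Fin n → Fin n) → ℂ) (i : Fin n)
    (x : Fin n → ℂ) :
    x i * fderiv ℂ (fun y : Fin n → ℂ => ∑ g : Fin n → Fin n, a g * ∏ k, y k ^ mu (g k)) x
        (Pi.single i 1)
      = ∑ g : Fin n → Fin n, (a g * (mu (g i) : ℂ)) * ∏ k, x k ^ mu (g k) := by
  rw [(hasFDerivAt_comb mu a x).fderiv]
  simp only [ContinuousLinearMap.sum_apply, ContinuousLinearMap.smul_apply,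
    ContinuousLinearMap.proj_apply, smul_eq_mul, Finset.mul_sum]
  refine Finset.sum_congr rfl fun g _ => ?_
  rw [Finset.sum_eq_single i (fun k _ hk => by simp [Pi.single_eq_of_ne hk]) (by simp)]
  simp only [Pi.single_eq_same, mul_one]
  rw [← Finset.mul_prod_erase Finset.univ _ (Finset.mem_univ i)]
  have h := euler_pow (x i) (mu (g i))
  linear_combination a g * (∏ j ∈ Finset.univ.erase i, x j ^ mu (g j)) * h

private lemma step_comb (mu : Fin n → ℕ)
    (step : Fin n × Fin n → ((Fin n → ℂ) → ℂ) → ((Fin n → ℂ) → ℂ))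
    (hstep : ∀ p f x, step p f x =
      x p.1 * fderiv ℂ f x (Pi.single p.1 1) - x p.2 * fderiv ℂ f x (Pi.single p.2 1))
    (p : Fin n × Fin n) (a : (Fin n → Fin n) → ℂ) :
    step p (fun x => ∑ g : Fin n → Fin n, a g * ∏ k, x k ^ mu (g k))
      = fun x => ∑ g : Fin n → Fin n,
          (a g * ((mu (g p.1) : ℂ) - (mu (g p.2) : ℂ))) * ∏ k, x k ^ mu (g k) := by
  funext x
  rw [hstep, euler_comb, euler_comb, ← Finset.sum_sub_distrib]
  exact Finset.sum_congr rfl fun g _ => by ring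

private lemma fold_comb (mu : Fin n → ℕ)
    (step : Fin n × Fin n → ((Fin n → ℂ) → ℂ) → ((Fin n → ℂ) → ℂ))
    (hstep : ∀ p f x, step p f x =
      x p.1 * fderiv ℂ f x (Pi.single p.1 1) - x p.2 * fderiv ℂ f x (Pi.single p.2 1))
    (L : List (Fin n × Fin n)) (a : (Fin n → Fin n) → ℂ) :
    L.foldr step (fun x => ∑ g : Fin n → Fin n, a g * ∏ k, x k ^ mu (g k))
      = fun x => ∑ g : Fin n → Fin n,
          (a g * (L.map (fun p => (mu (g p.1) : ℂ) - (mu (g p.2) : ℂ))).prod)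
            * ∏ k, x k ^ mu (g k) := by
  induction L with
  | nil => simp
  | cons p L ih =>
      rw [List.foldr_cons, ih, step_comb mu step hstep]
      funext x
      exact Finset.sum_congr rfl fun g _ => by rw [List.map_cons, List.prod_cons]; ring

private lemma prod_pairs (f : Fin n → Fin n → ℂ) :
    ∏ p ∈ Finset.univ.filter (fun p : Fin n × Fin n => p.1 < p.2), f p.1 p.2
      = ∏ i : Fin n, ∏ j ∈ Finset.Ioi i, f i j := by
  rw [Finset.prod_sigma']
  refine Finset.prod_bij' (fun p _ => (⟨p.1, p.2⟩ : Σ _ : Fin n, Fin n))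
    (fun q _ => (q.1, q.2)) ?_ ?_ ?_ ?_ ?_ <;>
    simp [Finset.mem_sigma]

private lemma prod_swap_lt (f : Fin n → Fin n → ℂ) :
    ∏ j : Fin n, ∏ k ∈ Finset.Iio j, f j k = ∏ i : Fin n, ∏ j ∈ Finset.Ioi i, f j i := by
  rw [Finset.prod_sigma', Finset.prod_sigma']
  refine Finset.prod_bij' (fun q _ => (⟨q.2, q.1⟩ : Σ _ : Fin n, Fin n))
    (fun q _ => (⟨q.2, q.1⟩ : Σ _ : Fin n, Fin n)) ?_ ?_ ?_ ?_ ?_ <;>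
    simp [Finset.mem_sigma]

private lemma prod_sign (mu : Fin n → ℕ) (σ : Equiv.Perm (Fin n)) :
    (∏ i : Fin n, ∏ j ∈ Finset.Ioi i, ((mu (σ i) : ℂ) - (mu (σ j) : ℂ)))
      = (Equiv.Perm.sign σ : ℂ) *
        ∏ i : Fin n, ∏ j ∈ Finset.Ioi i, ((mu i : ℂ) - (mu j : ℂ)) := by
  have h1 : Matrix.det (Matrix.vandermonde (fun i => -(mu (σ i) : ℂ)))
        = ∏ i : Fin n, ∏ j ∈ Finset.Ioi i, ((mu (σ i) : ℂ) - (mu (σ j) : ℂ)) := by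
    rw [Matrix.det_vandermonde]
    exact Finset.prod_congr rfl fun i _ => Finset.prod_congr rfl fun j _ => by ring
  have h1' : Matrix.det (Matrix.vandermonde (fun i => -(mu i : ℂ)))
        = ∏ i : Fin n, ∏ j ∈ Finset.Ioi i, ((mu i : ℂ) - (mu j : ℂ)) := by
    rw [Matrix.det_vandermonde]
    exact Finset.prod_congr rfl fun i _ => Finset.prod_congr rfl fun j _ => by ring
  have h2 : Matrix.vandermonde (fun i => -(mu (σ i) : ℂ))
      = (Matrix.vandermonde (fun i => -(mu i : ℂ))).submatrix σ id := by
    ext i j; simp [Matrix.vandermonde]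
  calc (∏ i : Fin n, ∏ j ∈ Finset.Ioi i, ((mu (σ i) : ℂ) - (mu (σ j) : ℂ)))
      = Matrix.det (Matrix.vandermonde (fun i => -(mu (σ i) : ℂ))) := h1.symm
    _ = (Equiv.Perm.sign σ : ℂ) * Matrix.det (Matrix.vandermonde (fun i => -(mu i : ℂ))) := by
        rw [h2, Matrix.det_permute]
    _ = (Equiv.Perm.sign σ : ℂ) *
        ∏ i : Fin n, ∏ j ∈ Finset.Ioi i, ((mu i : ℂ) - (mu j : ℂ)) := by rw [h1']

private lemma det_expand (mu : Fin n → ℕ) (x : Fin n → ℂ) :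
    Matrix.det (Matrix.of fun i j : Fin n => x i ^ mu j)
      = ∑ σ : Equiv.Perm (Fin n), (Equiv.Perm.sign σ : ℂ) * ∏ i : Fin n, x i ^ mu (σ i) := by
  rw [← Matrix.det_transpose, Matrix.det_apply]
  exact Finset.sum_congr rfl fun σ _ => by
    simp [Matrix.transpose_apply, Units.smul_def, zsmul_eq_mul]

private lemma Qzero (mu : Fin n → ℕ) {g : Fin n → Fin n} (hg : ¬ Function.Injective g) :
    ∏ i : Fin n, ∏ j ∈ Finset.Ioi i, ((mu (g i) : ℂ) - (mu (g j) : ℂ)) = 0 := by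
  obtain ⟨a, b, hab, hne⟩ := Function.not_injective_iff.mp hg
  rcases hne.lt_or_gt with h | h
  · exact Finset.prod_eq_zero (Finset.mem_univ a)
      (Finset.prod_eq_zero (Finset.mem_Ioi.mpr h) (by rw [hab]; ring))
  · exact Finset.prod_eq_zero (Finset.mem_univ b)
      (Finset.prod_eq_zero (Finset.mem_Ioi.mpr h) (by rw [hab]; ring))

private lemma erase_eq_union (j : Fin n) :
    Finset.univ.erase j = Finset.Iio j ∪ Finset.Ioi j := by
  ext k
  simp [Finset.mem_erase, lt_or_lt_iff_ne, or_comm, eq_comm, ne_comm]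

private lemma sum_card_Ioi : ∑ i : Fin n, (Finset.Ioi i).card = n * (n - 1) / 2 := by
  have h1 : ∀ i : Fin n, (Finset.Ioi i).card = n - 1 - (i : ℕ) := fun i => Fin.card_Ioi i
  rw [Finset.sum_congr rfl fun i _ => h1 i, Fin.sum_univ_eq_sum_range (fun k => n - 1 - k) n]
  rw [← Finset.sum_range_reflect]
  rw [← Finset.sum_range_id n]
  apply Finset.sum_congr rfl
  intro k hk
  rw [Finset.mem_range] at hk
  omega

end Aux

/-- Let `Kₙ = ∏_{i<j}(D_i − D_j)` with Euler operators
`D_i = x_i ∂/∂x_i`, and `φ_λ(z) = ∑_j c_j z^{μ_j}`,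
`c_j = ∏_{k≠j}(μ_j−μ_k)⁻¹`, for strictly decreasing `μ = λ + δ`.  Then
`Kₙ ∏_i φ_λ(x_i) = (c₁⋯cₙ) Δₙ(μ) a_μ(x) = (−1)^{n(n−1)/2} a_μ(x)/Δₙ(μ)`,
where `a_μ(x) = det(x_i^{μ_j})`. -/
theorem K_factorized_phi (n : ℕ) (mu : Fin n → ℕ) (hmu : StrictAnti mu)
    (c : Fin n → ℂ)
    (hc : ∀ j : Fin n, c j = ∏ k ∈ Finset.univ.erase j, ((mu j : ℂ) - (mu k : ℂ))⁻¹)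
    (phi : ℂ → ℂ) (hphi : ∀ z, phi z = ∑ j : Fin n, c j * z ^ mu j)
    (F : (Fin n → ℂ) → ℂ) (hF : ∀ x, F x = ∏ i : Fin n, phi (x i))
    (step : Fin n × Fin n → ((Fin n → ℂ) → ℂ) → ((Fin n → ℂ) → ℂ))
    (hstep : ∀ p f x, step p f x =
      x p.1 * fderiv ℂ f x (Pi.single p.1 1) - x p.2 * fderiv ℂ f x (Pi.single p.2 1)) :
    ((Finset.univ.filter (fun p : Fin n × Fin n => p.1 < p.2)).toList.foldr step F)
      = (fun x => ((∏ j : Fin n, c j) *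
          ∏ i : Fin n, ∏ j ∈ Finset.univ.filter (fun j : Fin n => i < j),
            ((mu i : ℂ) - (mu j : ℂ))) *
          Matrix.det (Matrix.of fun i j : Fin n => x i ^ mu j)) ∧
    ((Finset.univ.filter (fun p : Fin n × Fin n => p.1 < p.2)).toList.foldr step F)
      = (fun x => (-1 : ℂ) ^ (n * (n - 1) / 2) *
          Matrix.det (Matrix.of fun i j : Fin n => x i ^ mu j) /
          ∏ i : Fin n, ∏ j ∈ Finset.univ.filter (fun j : Fin n => i < j),
            ((mu i : ℂ) - (mu j : ℂ))) := by
  classical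
  have hfil : ∀ i : Fin n, Finset.univ.filter (fun j : Fin n => i < j) = Finset.Ioi i := by
    intro i; ext j; simp
  have hΔfil : (∏ i : Fin n, ∏ j ∈ Finset.univ.filter (fun j : Fin n => i < j),
      ((mu i : ℂ) - (mu j : ℂ)))
      = ∏ i : Fin n, ∏ j ∈ Finset.Ioi i, ((mu i : ℂ) - (mu j : ℂ)) :=
    Finset.prod_congr rfl fun i _ => by rw [hfil i]
  have hΔne : (∏ i : Fin n, ∏ j ∈ Finset.Ioi i, ((mu i : ℂ) - (mu j : ℂ))) ≠ 0 := by
    refine Finset.prod_ne_zero_iff.mpr fun i _ => Finset.prod_ne_zero_iff.mpr fun j hj => ?_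
    have h1 : mu j < mu i := hmu (Finset.mem_Ioi.mp hj)
    have h2 : (mu i : ℂ) ≠ (mu j : ℂ) := by exact_mod_cast h1.ne'
    exact sub_ne_zero.mpr h2
  have hFeq : F = fun x => ∑ g : Fin n → Fin n,
      (∏ i : Fin n, c (g i)) * ∏ k, x k ^ mu (g k) := by
    funext x
    rw [hF]
    simp only [hphi]
    rw [Finset.prod_univ_sum, Fintype.piFinset_univ]
    exact Finset.sum_congr rfl fun g _ => by rw [Finset.prod_mul_distrib]
  have hfold : (Finset.univ.filter (fun p : Fin n × Fin n => p.1 < p.2)).toList.foldr step F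
      = fun x => ∑ g : Fin n → Fin n,
          ((∏ i : Fin n, c (g i)) *
            ∏ i : Fin n, ∏ j ∈ Finset.Ioi i, ((mu (g i) : ℂ) - (mu (g j) : ℂ)))
            * ∏ k, x k ^ mu (g k) := by
    rw [hFeq, fold_comb mu step hstep]
    funext x
    refine Finset.sum_congr rfl fun g _ => ?_
    rw [Finset.prod_map_toList, prod_pairs (fun i j => (mu (g i) : ℂ) - (mu (g j) : ℂ))]
  have hkey : (fun x : Fin n → ℂ => ∑ g : Fin n → Fin n,
      ((∏ i : Fin n, c (g i)) *
        ∏ i : Fin n, ∏ j ∈ Finset.Ioi i, ((mu (g i) : ℂ) - (mu (g j) : ℂ)))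
        * ∏ k, x k ^ mu (g k))
      = fun x : Fin n → ℂ => ((∏ j : Fin n, c j) *
          ∏ i : Fin n, ∏ j ∈ Finset.Ioi i, ((mu i : ℂ) - (mu j : ℂ))) *
          Matrix.det (Matrix.of fun i j : Fin n => x i ^ mu j) := by
    funext x
    rw [det_expand, Finset.mul_sum]
    rw [← Finset.sum_filter_of_ne
      (p := fun g : Fin n → Fin n => Function.Injective g)
      (fun g _ hgne => by
        by_contra hginj
        exact hgne (by rw [Qzero mu hginj]; ring))]
    have hbij : ∑ g ∈ Finset.univ.filter (fun g : Fin n → Fin n => Function.Injective g),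
        ((∏ i : Fin n, c (g i)) *
          ∏ i : Fin n, ∏ j ∈ Finset.Ioi i, ((mu (g i) : ℂ) - (mu (g j) : ℂ)))
          * ∏ k, x k ^ mu (g k)
        = ∑ σ : Equiv.Perm (Fin n),
        ((∏ i : Fin n, c (σ i)) *
          ∏ i : Fin n, ∏ j ∈ Finset.Ioi i, ((mu (σ i) : ℂ) - (mu (σ j) : ℂ)))
          * ∏ k, x k ^ mu (σ k) :=
      Finset.sum_bij'
        (fun g hg => Equiv.ofBijective g
          (Finite.injective_iff_bijective.mp (Finset.mem_filter.mp hg).2))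
        (fun σ _ => ⇑σ) (fun g hg => Finset.mem_univ _)
        (fun σ _ => Finset.mem_filter.mpr ⟨Finset.mem_univ _, σ.injective⟩)
        (fun g hg => rfl) (fun σ _ => Equiv.ext fun y => rfl)
        (fun g hg => rfl)
    rw [hbij]
    exact Finset.sum_congr rfl fun σ _ => by
      rw [prod_sign mu σ, Equiv.prod_comp σ c]; ring
  have hscal : (∏ j : Fin n, c j) *
      (∏ i : Fin n, ∏ j ∈ Finset.Ioi i, ((mu i : ℂ) - (mu j : ℂ)))
      = (-1 : ℂ) ^ (n * (n - 1) / 2) /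
        ∏ i : Fin n, ∏ j ∈ Finset.Ioi i, ((mu i : ℂ) - (mu j : ℂ)) := by
    have hE : (∏ j : Fin n, ∏ k ∈ Finset.univ.erase j, ((mu j : ℂ) - (mu k : ℂ)))
        = (-1 : ℂ) ^ (n * (n - 1) / 2) *
          (∏ i : Fin n, ∏ j ∈ Finset.Ioi i, ((mu i : ℂ) - (mu j : ℂ))) *
          (∏ i : Fin n, ∏ j ∈ Finset.Ioi i, ((mu i : ℂ) - (mu j : ℂ))) := by
      have hsplit : ∀ j : Fin n, ∏ k ∈ Finset.univ.erase j, ((mu j : ℂ) - (mu k : ℂ))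
          = (∏ k ∈ Finset.Iio j, ((mu j : ℂ) - (mu k : ℂ))) *
            ∏ k ∈ Finset.Ioi j, ((mu j : ℂ) - (mu k : ℂ)) := by
        intro j
        rw [erase_eq_union, Finset.prod_union ((Finset.disjoint_Ioi_Iio j).symm)]
      rw [Finset.prod_congr rfl fun j _ => hsplit j, Finset.prod_mul_distrib]
      have hfirst : (∏ j : Fin n, ∏ k ∈ Finset.Iio j, ((mu j : ℂ) - (mu k : ℂ)))
          = (-1 : ℂ) ^ (n * (n - 1) / 2) *
            ∏ i : Fin n, ∏ j ∈ Finset.Ioi i, ((mu i : ℂ) - (mu j : ℂ)) := by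
        rw [prod_swap_lt (fun j k => (mu j : ℂ) - (mu k : ℂ))]
        have hneg : ∀ i : Fin n, ∏ j ∈ Finset.Ioi i, ((mu j : ℂ) - (mu i : ℂ))
            = (-1 : ℂ) ^ (Finset.Ioi i).card *
              ∏ j ∈ Finset.Ioi i, ((mu i : ℂ) - (mu j : ℂ)) := by
          intro i
          rw [← Finset.prod_const, ← Finset.prod_mul_distrib]
          exact Finset.prod_congr rfl fun j _ => by ring
        rw [Finset.prod_congr rfl fun i _ => hneg i, Finset.prod_mul_distrib,
          Finset.prod_pow_eq_pow_sum, sum_card_Ioi]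
      rw [hfirst]
    have hcprod : (∏ j : Fin n, c j)
        = ((-1 : ℂ) ^ (n * (n - 1) / 2) *
          (∏ i : Fin n, ∏ j ∈ Finset.Ioi i, ((mu i : ℂ) - (mu j : ℂ))) *
          (∏ i : Fin n, ∏ j ∈ Finset.Ioi i, ((mu i : ℂ) - (mu j : ℂ))))⁻¹ := by
      rw [← hE, Finset.prod_congr rfl fun j _ => hc j,
        Finset.prod_congr rfl fun j (_ : j ∈ Finset.univ) => Finset.prod_inv_distrib _,
        Finset.prod_inv_distrib]
    rw [hcprod]
    have hpow : ((-1 : ℂ) ^ (n * (n - 1) / 2)) ≠ 0 := pow_ne_zero _ (by norm_num)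
    have h1 : (-1 : ℂ) ^ (n * (n - 1) / 2) * (-1) ^ (n * (n - 1) / 2) = 1 := by
      rw [← pow_add, ← two_mul, pow_mul, neg_one_sq, one_pow]
    have h2 : ((-1 : ℂ) ^ (n * (n - 1) / 2))⁻¹ = (-1) ^ (n * (n - 1) / 2) :=
      inv_eq_of_mul_eq_one_right h1
    rw [mul_inv, mul_inv, h2, div_eq_mul_inv]
    have h3 := inv_mul_cancel₀ hΔne
    linear_combination ((-1 : ℂ) ^ (n * (n - 1) / 2) *
      (∏ i : Fin n, ∏ j ∈ Finset.Ioi i, ((mu i : ℂ) - (mu j : ℂ)))⁻¹) * h3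
  refine ⟨?_, ?_⟩
  · rw [hfold, hkey, hΔfil]
  · rw [hfold, hkey]
    funext x
    rw [hΔfil, hscal]
    ring
end
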